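/- Let a < b be reals and let U_n be an (n+1)-dimensional subspace of C^n([a,b],ℝ) possessing a non-negative Bernstein basis p_{n,0},…,p_{n,n}, and let f_0 ∈ U_n be strictly positive on [a,b] with D_{f_0}U_n := { (f/f_0)′ : f ∈ U_n } possessing a non-negative Bernstein basis q_{n-1,0},…,q_{n-1,n-1}. Let f_1 ∈ U_n be such that f_1/f_0 is strictly increasing on [a,b], write f_0 = Σ_{k=0}^n β_{n,k} p_{n,k} and f_1 = Σ_{k=0}^n γ_{n,k} p_{n,k}, assume β_{n,k} > 0 for all k, and define coefficients w_0,…,w_{n-1} by (f_1/f_0)′ = Σ_{k=0}^{n-1} w_k q_{n-1,k}. Then the sequence k ↦ γ_{n,k}/β_{n,k} is non-decreasing if and only if w_k ≥ 0 for all k = 0,…,n−1. -/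

import Mathlib

open Set Filter Topology

noncomputable section

/-- `p k`, `k = 0, …, n`, is a Bernstein basis of the `(n+1)`-dimensional subspace `U` of
`C^n([a,b], ℝ)`: it is a basis of `U` and each `p k` has a zero of order `k` at `a`
(derivatives of order `< k` vanish at `a`, the `k`-th does not) and a zero of order
`n - k` at `b`. -/
def IsBernsteinBasisOf (a b : ℝ) (n : ℕ) (U : Submodule ℝ (ℝ → ℝ))
    (p : Fin (n + 1) → ℝ → ℝ) : Prop :=
  (∀ k, p k ∈ U) ∧ LinearIndependent ℝ p ∧ Submodule.span ℝ (Set.range p) = U ∧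
  ∀ k : Fin (n + 1),
    (∀ j : ℕ, j < (k : ℕ) → iteratedDeriv j (p k) a = 0) ∧
    iteratedDeriv (k : ℕ) (p k) a ≠ 0 ∧
    (∀ j : ℕ, j < n - (k : ℕ) → iteratedDeriv j (p k) b = 0) ∧
    iteratedDeriv (n - (k : ℕ)) (p k) b ≠ 0

/-- `q k`, `k = 0, …, n-1`, is a Bernstein basis of the `n`-dimensional space
`D_{f₀}U = { (f/f₀)' : f ∈ U }`: every `q k` lies in `D_{f₀}U`, every element of `D_{f₀}U`
lies in the span of the `q k`, the family is linearly independent, and each `q k` has a zero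
of order `k` at `a` and a zero of order `n - 1 - k` at `b`. -/
def IsBernsteinBasisOfD (a b : ℝ) (n : ℕ) (f₀ : ℝ → ℝ) (U : Submodule ℝ (ℝ → ℝ))
    (q : Fin n → ℝ → ℝ) : Prop :=
  (∀ k, ∃ f ∈ U, q k = deriv (fun x => f x / f₀ x)) ∧
  (∀ f ∈ U, deriv (fun x => f x / f₀ x) ∈ Submodule.span ℝ (Set.range q)) ∧
  LinearIndependent ℝ q ∧
  ∀ k : Fin n,
    (∀ j : ℕ, j < (k : ℕ) → iteratedDeriv j (q k) a = 0) ∧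
    iteratedDeriv (k : ℕ) (q k) a ≠ 0 ∧
    (∀ j : ℕ, j < n - 1 - (k : ℕ) → iteratedDeriv j (q k) b = 0) ∧
    iteratedDeriv (n - 1 - (k : ℕ)) (q k) b ≠ 0

namespace RatioAux

lemma iterDW_eq {j : ℕ} {O : Set ℝ} (hO : IsOpen O) {x : ℝ} (hx : x ∈ O) (f : ℝ → ℝ) :
    iteratedDerivWithin j f O x = iteratedDeriv j f x := by
  rw [iteratedDerivWithin_eq_iteratedFDerivWithin, iteratedDeriv_eq_iteratedFDeriv,
    iteratedFDerivWithin_of_isOpen j hO hx]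

lemma iteratedDeriv_fun_sum {j : ℕ} {O : Set ℝ} (hO : IsOpen O) {x : ℝ} (hx : x ∈ O)
    {ι : Type*} (u : Finset ι) (f : ι → ℝ → ℝ) (hf : ∀ i ∈ u, ContDiffOn ℝ j (f i) O) :
    iteratedDeriv j (fun y => ∑ i ∈ u, f i y) x = ∑ i ∈ u, iteratedDeriv j (f i) x := by
  have h1 : iteratedDeriv j (fun y => ∑ i ∈ u, f i y) x
      = iteratedDerivWithin j (∑ i ∈ u, f i ·) O x := (iterDW_eq hO hx _).symm
  rw [h1, iteratedDerivWithin_eq_iteratedFDerivWithin,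
    iteratedFDerivWithin_fun_sum_apply hO.uniqueDiffOn hx (fun i hi => hf i hi x hx)]
  simp only [ContinuousMultilinearMap.sum_apply]
  exact Finset.sum_congr rfl fun i hi => by
    rw [← iteratedDerivWithin_eq_iteratedFDerivWithin, iterDW_eq hO hx]

lemma iteratedDeriv_fun_const_mul {j : ℕ} {O : Set ℝ} (hO : IsOpen O) {x : ℝ} (hx : x ∈ O)
    (c : ℝ) {f : ℝ → ℝ} (hf : ContDiffOn ℝ j f O) :
    iteratedDeriv j (fun y => c * f y) x = c * iteratedDeriv j f x := by
  rw [← iterDW_eq hO hx, ← iterDW_eq hO hx f, iteratedDerivWithin_const_mul hx hO.uniqueDiffOn c (hf x hx)]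

lemma iteratedDeriv_fun_zero {j : ℕ} {x : ℝ} :
    iteratedDeriv j (fun _ : ℝ => (0 : ℝ)) x = 0 := by
  rw [iteratedDeriv_eq_iteratedFDeriv, iteratedFDeriv_zero_fun]
  rfl

lemma iteratedDeriv_fun_add {j : ℕ} {O : Set ℝ} (hO : IsOpen O) {x : ℝ} (hx : x ∈ O)
    {f g : ℝ → ℝ} (hf : ContDiffOn ℝ j f O) (hg : ContDiffOn ℝ j g O) :
    iteratedDeriv j (fun y => f y + g y) x = iteratedDeriv j f x + iteratedDeriv j g x := by
  rw [← iterDW_eq hO hx, ← iterDW_eq hO hx f, ← iterDW_eq hO hx g]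
  exact iteratedDerivWithin_add hx hO.uniqueDiffOn (hf x hx) (hg x hx)

lemma vanish_mul {O : Set ℝ} (hO : IsOpen O) {x : ℝ} (hx : x ∈ O) :
    ∀ (m : ℕ) (u v : ℝ → ℝ), ContDiffOn ℝ m u O → ContDiffOn ℝ m v O →
      (∀ i ≤ m, iteratedDeriv i u x = 0) →
      iteratedDeriv m (fun y => u y * v y) x = 0 := by
  intro m
  induction m with
  | zero =>
    intro u v _ _ h
    have h0 : u x = 0 := by simpa using h 0 le_rfl
    simp [h0]
  | succ m IH =>
    intro u v hu hv h
    have hu' : ContDiffOn ℝ m (deriv u) O :=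
      hu.deriv_of_isOpen hO (by exact_mod_cast le_refl (m + 1 : ℕ))
    have hv' : ContDiffOn ℝ m (deriv v) O :=
      hv.deriv_of_isOpen hO (by exact_mod_cast le_refl (m + 1 : ℕ))
    have hum : ContDiffOn ℝ m u O := hu.of_le (by exact_mod_cast Nat.le_succ m)
    have hvm : ContDiffOn ℝ m v O := hv.of_le (by exact_mod_cast Nat.le_succ m)
    have hder : deriv (fun z => u z * v z)
        =ᶠ[nhds x] fun y => deriv u y * v y + u y * deriv v y := by
      filter_upwards [hO.mem_nhds hx] with y hy
      have hus : DifferentiableAt ℝ u y :=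
        ((hu.differentiableOn (by simp)).differentiableAt
          (hO.mem_nhds hy))
      have hvs : DifferentiableAt ℝ v y :=
        ((hv.differentiableOn (by simp)).differentiableAt
          (hO.mem_nhds hy))
      exact deriv_mul hus hvs
    rw [iteratedDeriv_succ', hder.iteratedDeriv_eq m,
      iteratedDeriv_fun_add hO hx (hu'.mul hvm) (hum.mul hv'),
      IH (deriv u) v hu' hvm (fun i hi => by
        rw [← iteratedDeriv_succ']
        exact h (i + 1) (Nat.succ_le_succ hi)),
      IH u (deriv v) hum hv' (fun i hi => h i (le_trans hi (Nat.le_succ m))), add_zero]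

lemma elim_tri {n K : ℕ} (o : Fin n → ℕ) (ho : Function.Injective o)
    (A : ℕ → Fin n → ℝ) (d : Fin n → ℝ)
    (h0 : ∀ (j : ℕ) (m : Fin n), j < o m → A j m = 0)
    (hdg : ∀ m, A (o m) m ≠ 0)
    (hz : ∀ j : ℕ, j < K → ∑ m, d m * A j m = 0) :
    ∀ m : Fin n, o m < K → d m = 0 := by
  have key : ∀ i : ℕ, i < K → ∀ m : Fin n, o m = i → d m = 0 := by
    intro i
    induction i using Nat.strong_induction_on with
    | _ i IH =>
      intro hiK m hmi
      have h := hz i hiK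
      have hsingle : ∑ m', d m' * A i m' = d m * A i m := by
        refine Finset.sum_eq_single m (fun m' _ hne => ?_) (fun h => absurd (Finset.mem_univ m) h)
        rcases lt_or_gt_of_ne (fun h : o m' = o m => hne (ho h)) with hlt | hgt
        · rw [IH (o m') (by omega) (by omega) m' rfl, zero_mul]
        · rw [h0 i m' (by omega), mul_zero]
      rw [hsingle] at h
      rcases mul_eq_zero.mp h with h' | h'
      · exact h'
      · exact absurd (hmi ▸ h') (hdg m)
  exact fun m hm => key (o m) hm m rfl

lemma telescope {n : ℕ} (r : Fin (n + 1) → ℝ) (j : Fin (n + 1)) :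
    ∑ k : Fin n, (if (k : ℕ) < (j : ℕ) then r k.succ - r k.castSucc else 0) = r j - r 0 := by
  set r' : ℕ → ℝ := fun i => if h : i < n + 1 then r ⟨i, h⟩ else 0 with hr'
  have h1 : ∀ k : Fin n, (if (k : ℕ) < (j : ℕ) then r k.succ - r k.castSucc else 0)
      = (fun i : ℕ => if i < (j : ℕ) then r' (i + 1) - r' i else 0) (k : ℕ) := by
    intro k
    simp only [hr']
    rcases lt_or_ge (k : ℕ) (j : ℕ) with h | h
    · rw [if_pos h, if_pos h, dif_pos (by omega), dif_pos (by omega)]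
      congr 1
    · rw [if_neg (by omega), if_neg (by omega)]
  rw [Finset.sum_congr rfl (fun k _ => h1 k),
    Fin.sum_univ_eq_sum_range (fun i : ℕ => if i < (j : ℕ) then r' (i + 1) - r' i else 0) n,
    ← Finset.sum_filter]
  have h2 : (Finset.range n).filter (fun i => i < (j : ℕ)) = Finset.range (j : ℕ) := by
    ext i
    simp only [Finset.mem_filter, Finset.mem_range]
    have := j.isLt
    omega
  rw [h2, Finset.sum_range_sub (f := r')]
  have hj : r' (j : ℕ) = r j := by rw [hr']; simp [j.isLt]
  have h0 : r' 0 = r 0 := by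
    show (if h : 0 < n + 1 then r ⟨0, h⟩ else 0) = r 0
    rw [dif_pos (Nat.succ_pos n)]
    rfl
  rw [hj, h0]

end RatioAux

/-- Theorem (b) ⟺ (c): `k ↦ γ k / β k` is non-decreasing iff all the coefficients `w k` of
`(f₁/f₀)'` in the Bernstein basis of `D_{f₀}U` are non-negative. -/
theorem ratio_monotone_iff_w_nonneg
    (n : ℕ) (a b : ℝ) (hab : a < b)
    (U : Submodule ℝ (ℝ → ℝ))
    (hUdim : Module.finrank ℝ ↥U = n + 1)
    (hUsmooth : ∀ f ∈ U, ContDiff ℝ (n : ℕ∞) f)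
    (p : Fin (n + 1) → ℝ → ℝ)
    (hp : IsBernsteinBasisOf a b n U p)
    (hpnn : ∀ k, ∀ x ∈ Set.Icc a b, 0 ≤ p k x)
    (f₀ f₁ : ℝ → ℝ) (hf₀U : f₀ ∈ U) (hf₁U : f₁ ∈ U)
    (hf₀pos : ∀ x ∈ Set.Icc a b, 0 < f₀ x)
    (q : Fin n → ℝ → ℝ)
    (hq : IsBernsteinBasisOfD a b n f₀ U q)
    (hqnn : ∀ k, ∀ x ∈ Set.Icc a b, 0 ≤ q k x)
    (hmono : StrictMonoOn (fun x => f₁ x / f₀ x) (Set.Icc a b))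
    (β γ : Fin (n + 1) → ℝ)
    (hβ : ∀ x, f₀ x = ∑ k, β k * p k x)
    (hγ : ∀ x, f₁ x = ∑ k, γ k * p k x)
    (hβpos : ∀ k, 0 < β k)
    (w : Fin n → ℝ)
    (hw : ∀ x, deriv (fun y => f₁ y / f₀ y) x = ∑ k, w k * q k x) :
    (Monotone fun k => γ k / β k) ↔ ∀ k, 0 ≤ w k := by
  classical
  rcases Nat.eq_zero_or_pos n with rfl | hn
  · constructor
    · intro _ k; exact k.elim0
    · intro _ i j _
      have hij : i = j := Fin.ext (by omega)
      exact le_of_eq (by rw [hij])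
  obtain ⟨hpU, -, -, hpz⟩ := hp
  obtain ⟨hqex, hqspan, -, hqz⟩ := hq
  have hf₀c : Continuous f₀ := (hUsmooth f₀ hf₀U).continuous
  set O : Set ℝ := {x | f₀ x ≠ 0} with hOdef
  have hO : IsOpen O := isOpen_ne_fun hf₀c continuous_const
  have hIccO : Set.Icc a b ⊆ O := fun x hx => (hf₀pos x hx).ne'
  have haO : a ∈ O := hIccO ⟨le_refl a, hab.le⟩
  have hbO : b ∈ O := hIccO ⟨hab.le, le_refl b⟩
  have hinv : ContDiffOn ℝ (n : ℕ∞) (fun x => (f₀ x)⁻¹) O :=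
    ((hUsmooth f₀ hf₀U).contDiffOn).inv (fun x hx => hx)
  have hdivC : ∀ f ∈ U, ContDiffOn ℝ (n : ℕ∞) (fun x => f x / f₀ x) O :=
    fun f hf => ((hUsmooth f hf).contDiffOn).div ((hUsmooth f₀ hf₀U).contDiffOn) (fun x hx => hx)
  have hdivDiff : ∀ f ∈ U, ∀ x ∈ O, DifferentiableAt ℝ (fun y => f y / f₀ y) x := by
    intro f hf x hx
    exact ((hdivC f hf).differentiableOn (by exact_mod_cast hn.ne')).differentiableAt (hO.mem_nhds hx)
  have hqsm : ∀ m₀ : Fin n, ContDiffOn ℝ ((n - 1 : ℕ) : ℕ∞) (q m₀) O := by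
    intro m₀
    obtain ⟨f, hfU, hqeq⟩ := hqex m₀
    rw [hqeq]
    refine (hdivC f hfU).deriv_of_isOpen hO ?_
    exact_mod_cast (Nat.succ_pred_eq_of_pos hn).le
  have hqsm' : ∀ (m₀ : Fin n) (j : ℕ), j ≤ n - 1 → ContDiffOn ℝ (j : ℕ∞) (q m₀) O :=
    fun m₀ j hj => (hqsm m₀).of_le (by exact_mod_cast hj)
  -- iterated derivatives of combinations of the `q`'s
  have hS : ∀ (d : Fin n → ℝ) (j : ℕ), j ≤ n - 1 → ∀ x ∈ O,
      iteratedDeriv j (fun y => ∑ m₀, d m₀ * q m₀ y) x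
        = ∑ m₀, d m₀ * iteratedDeriv j (q m₀) x := by
    intro d j hj x hx
    rw [RatioAux.iteratedDeriv_fun_sum hO hx Finset.univ (fun m₀ => fun y => d m₀ * q m₀ y)
      (fun m₀ _ => contDiffOn_const.mul (hqsm' m₀ j hj))]
    exact Finset.sum_congr rfl fun m₀ _ =>
      RatioAux.iteratedDeriv_fun_const_mul hO hx (d m₀) (hqsm' m₀ j hj)
  -- combinations of the `p`'s
  have heU : ∀ c : Fin (n + 1) → ℝ, (fun x => ∑ j, c j * p j x) ∈ U := by
    intro c
    have h1 : (fun x => ∑ j, c j * p j x) = ∑ j : Fin (n + 1), c j • p j := by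
      funext x; simp [Finset.sum_apply]
    rw [h1]
    exact Submodule.sum_mem _ (fun j _ => Submodule.smul_mem _ _ (hpU j))
  have hpsm : ∀ (j : Fin (n + 1)) (i : ℕ), i ≤ n → ContDiffOn ℝ (i : ℕ∞) (p j) Set.univ :=
    fun j i hi => ((hUsmooth _ (hpU j)).contDiffOn).of_le (by exact_mod_cast hi)
  have hE : ∀ (c : Fin (n + 1) → ℝ) (i : ℕ), i ≤ n → ∀ x : ℝ,
      iteratedDeriv i (fun y => ∑ j, c j * p j y) x = ∑ j, c j * iteratedDeriv i (p j) x := by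
    intro c i hi x
    rw [RatioAux.iteratedDeriv_fun_sum isOpen_univ (Set.mem_univ x) Finset.univ
      (fun j => fun y => c j * p j y) (fun j _ => contDiffOn_const.mul (hpsm j i hi))]
    exact Finset.sum_congr rfl fun j _ =>
      RatioAux.iteratedDeriv_fun_const_mul isOpen_univ (Set.mem_univ x) (c j) (hpsm j i hi)
  -- the key step: representation of the derivative of the tail quotients
  have key : ∀ k : Fin n, ∃ C : ℝ, 0 < C ∧ ∀ x : ℝ,
      deriv (fun y => (∑ j : Fin (n + 1), (if (k : ℕ) < (j : ℕ) then β j else 0) * p j y) / f₀ y) x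
        = C * q k x := by
    intro k
    set ek : Fin (n + 1) → ℝ := fun j => if (k : ℕ) < (j : ℕ) then β j else 0 with hek
    set hk : ℝ → ℝ := fun y => ∑ j, ek j * p j y with hhk
    set gk : ℝ → ℝ := fun y => ∑ j : Fin (n + 1), (if (j : ℕ) ≤ (k : ℕ) then β j else 0) * p j y with hgk
    have hkU : hk ∈ U := by rw [hhk]; exact heU ek
    have hkC : ContDiff ℝ (n : ℕ∞) hk := hUsmooth hk hkU
    have hgkU : gk ∈ U := by rw [hgk]; exact heU _
    have hgkC : ContDiff ℝ (n : ℕ∞) gk := hUsmooth gk hgkU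
    set tk : ℝ → ℝ := fun y => hk y / f₀ y with htk
    have hmem := hqspan hk hkU
    rw [Submodule.mem_span_range_iff_exists_fun ℝ] at hmem
    obtain ⟨c, hc⟩ := hmem
    have hcpt : ∀ x, deriv tk x = ∑ m₀, c m₀ * q m₀ x := by
      intro x
      have := congrFun hc x
      simp only [Finset.sum_apply, Pi.smul_apply, smul_eq_mul] at this
      rw [htk, ← this]
    have hkb : (k : ℕ) ≤ n - 1 := by have := k.isLt; omega
    -- vanishing of hk at a up to order k
    have hhka : ∀ i, i ≤ (k : ℕ) → iteratedDeriv i hk a = 0 := by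
      intro i hi
      rw [hhk, hE ek i (by omega) a]
      refine Finset.sum_eq_zero fun j _ => ?_
      by_cases hj : (k : ℕ) < (j : ℕ)
      · rw [hek]
        simp only [if_pos hj]
        rw [(hpz j).1 i (by omega), mul_zero]
      · rw [hek]
        simp only [if_neg hj]
        rw [zero_mul]
    -- vanishing of gk at b up to order n - 1 - k
    have hgkb : ∀ i, i ≤ n - 1 - (k : ℕ) → iteratedDeriv i gk b = 0 := by
      intro i hi
      rw [hgk, hE (fun j => if (j : ℕ) ≤ (k : ℕ) then β j else 0) i (by omega) b]
      refine Finset.sum_eq_zero fun j _ => ?_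
      by_cases hj : (j : ℕ) ≤ (k : ℕ)
      · simp only [if_pos hj]
        rw [(hpz j).2.2.1 i (by have := j.isLt; have := k.isLt; omega), mul_zero]
      · simp only [if_neg hj]
        rw [zero_mul]
    -- tk as a product
    have htkprod : tk = fun y => hk y * (f₀ y)⁻¹ := by
      funext y
      show hk y / f₀ y = hk y * (f₀ y)⁻¹
      exact div_eq_mul_inv _ _
    -- derivative of tk vanishes at a up to order k - 1
    have hta : ∀ j' : ℕ, j' < (k : ℕ) → iteratedDeriv j' (deriv tk) a = 0 := by
      intro j' hj'
      rw [← iteratedDeriv_succ', htkprod]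
      exact RatioAux.vanish_mul hO haO (j' + 1) hk _
        (hkC.contDiffOn.of_le (by exact_mod_cast (by omega : j' + 1 ≤ n)))
        (hinv.of_le (by exact_mod_cast (by omega : j' + 1 ≤ n)))
        (fun i hi => hhka i (by omega))
    -- hk + gk = f₀
    have hsum : ∀ y, hk y + gk y = f₀ y := by
      intro y
      show (∑ j : Fin (n + 1), ek j * p j y)
          + (∑ j : Fin (n + 1), (if (j : ℕ) ≤ (k : ℕ) then β j else 0) * p j y) = f₀ y
      rw [← Finset.sum_add_distrib, hβ y]
      refine Finset.sum_congr rfl fun j _ => ?_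
      rw [hek]
      by_cases hj : (k : ℕ) < (j : ℕ)
      · simp only [if_pos hj, if_neg (by omega : ¬ (j : ℕ) ≤ (k : ℕ))]; ring
      · simp only [if_neg hj, if_pos (by omega : (j : ℕ) ≤ (k : ℕ))]; ring
    -- derivative of tk vanishes at b up to order n - 1 - k - 1
    have htb : ∀ j' : ℕ, j' < n - 1 - (k : ℕ) → iteratedDeriv j' (deriv tk) b = 0 := by
      intro j' hj'
      have hEq : deriv tk =ᶠ[nhds b] fun y => -(deriv (fun z => gk z * (f₀ z)⁻¹) y) := by
        filter_upwards [hO.mem_nhds hbO] with y hy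
        have h1 : tk =ᶠ[nhds y] fun z => 1 - gk z * (f₀ z)⁻¹ := by
          filter_upwards [hO.mem_nhds hy] with z hz
          have hz' : f₀ z ≠ 0 := hz
          show hk z / f₀ z = 1 - gk z * (f₀ z)⁻¹
          have hsz := hsum z
          field_simp
          linarith
        rw [h1.deriv_eq, deriv_const_sub]
      rw [hEq.iteratedDeriv_eq j', iteratedDeriv_fun_neg, ← iteratedDeriv_succ',
        RatioAux.vanish_mul hO hbO (j' + 1) gk _
          (hgkC.contDiffOn.of_le (by exact_mod_cast (by omega : j' + 1 ≤ n)))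
          (hinv.of_le (by exact_mod_cast (by omega : j' + 1 ≤ n)))
          (fun i hi => hgkb i (by omega)), neg_zero]
    -- eliminate coefficients below k
    have hfun : (fun y => ∑ m₀, c m₀ * q m₀ y) = deriv tk := funext fun y => (hcpt y).symm
    have hza : ∀ j', j' < (k : ℕ) → ∑ m₀ : Fin n, c m₀ * iteratedDeriv j' (q m₀) a = 0 := by
      intro j' hj'
      rw [← hS c j' (by omega) a haO, hfun]
      exact hta j' hj'
    have hzb : ∀ j', j' < n - 1 - (k : ℕ) → ∑ m₀ : Fin n, c m₀ * iteratedDeriv j' (q m₀) b = 0 := by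
      intro j' hj'
      rw [← hS c j' (by omega) b hbO, hfun]
      exact htb j' hj'
    have hca : ∀ m₀ : Fin n, (m₀ : ℕ) < (k : ℕ) → c m₀ = 0 :=
      RatioAux.elim_tri (fun m₀ => (m₀ : ℕ)) (fun _ _ h => Fin.ext h) (fun j m₀ => iteratedDeriv j (q m₀) a) c
        (fun j m₀ hj => (hqz m₀).1 j hj) (fun m₀ => (hqz m₀).2.1) hza
    have hcb : ∀ m₀ : Fin n, n - 1 - (m₀ : ℕ) < n - 1 - (k : ℕ) → c m₀ = 0 :=
      RatioAux.elim_tri (fun m₀ => n - 1 - (m₀ : ℕ))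
        (fun m₁ m₂ h => Fin.ext (by
          have h' : n - 1 - (m₁ : ℕ) = n - 1 - (m₂ : ℕ) := h
          have := m₁.isLt; have := m₂.isLt; omega)) (fun j m₀ => iteratedDeriv j (q m₀) b) c
        (fun j m₀ hj => (hqz m₀).2.2.1 j hj) (fun m₀ => (hqz m₀).2.2.2) hzb
    have hck : ∀ m₀ : Fin n, m₀ ≠ k → c m₀ = 0 := by
      intro m₀ hne
      rcases lt_or_gt_of_ne (fun h : (m₀ : ℕ) = (k : ℕ) => hne (Fin.ext h)) with hlt | hgt
      · exact hca m₀ hlt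
      · exact hcb m₀ (by have := m₀.isLt; omega)
    have hcollapse : ∀ x, deriv tk x = c k * q k x := by
      intro x
      rw [hcpt x]
      exact Finset.sum_eq_single k (fun m₀ _ hne => by rw [hck m₀ hne, zero_mul])
        (fun h => absurd (Finset.mem_univ k) h)
    -- positivity of c k via the fundamental theorem of calculus
    have hqcont : ContinuousOn (q k) (Set.Icc a b) := ((hqsm k).continuousOn).mono hIccO
    have hderivtk : deriv tk = fun y => c k * q k y := funext hcollapse
    have hint : IntervalIntegrable (deriv tk) MeasureTheory.volume a b := by
      rw [hderivtk]
      apply ContinuousOn.intervalIntegrable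
      rw [Set.uIcc_of_le hab.le]
      exact continuousOn_const.mul hqcont
    have hdT : ∀ x ∈ Set.uIcc a b, DifferentiableAt ℝ tk x := by
      intro x hx
      rw [Set.uIcc_of_le hab.le] at hx
      exact hdivDiff hk hkU x (hIccO hx)
    have hFTC := intervalIntegral.integral_deriv_eq_sub hdT hint
    have htka : tk a = 0 := by
      have hka : hk a = 0 := by
        show (∑ j : Fin (n + 1), ek j * p j a) = 0
        refine Finset.sum_eq_zero fun j _ => ?_
        rw [hek]
        by_cases hj : (k : ℕ) < (j : ℕ)
        · have hpj : p j a = 0 := by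
            have := (hpz j).1 0 (by omega)
            simpa using this
          rw [hpj, mul_zero]
        · simp only [if_neg hj]; rw [zero_mul]
      show hk a / f₀ a = 0
      rw [hka, zero_div]
    have hpnb : 0 < p (Fin.last n) b := by
      have hne := (hpz (Fin.last n)).2.2.2
      have h0 : n - ((Fin.last n : Fin (n + 1)) : ℕ) = 0 := by simp [Fin.last]
      rw [h0] at hne
      simp only [iteratedDeriv_zero] at hne
      exact lt_of_le_of_ne (hpnn _ b ⟨hab.le, le_refl b⟩) (Ne.symm hne)
    have htkb : 0 < tk b := by
      have hhkb : hk b = ek (Fin.last n) * p (Fin.last n) b := by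
        show (∑ j : Fin (n + 1), ek j * p j b) = ek (Fin.last n) * p (Fin.last n) b
        refine Finset.sum_eq_single (Fin.last n) (fun j _ hne => ?_) ?_
        · have hjn : (j : ℕ) < n := by
            have h1 := j.isLt
            have h2 : (j : ℕ) ≠ n := fun h => hne (Fin.ext (by simp [Fin.last, h]))
            omega
          have hpj : p j b = 0 := by
            have := (hpz j).2.2.1 0 (by omega)
            simpa using this
          rw [hpj, mul_zero]
        · intro h; exact absurd (Finset.mem_univ _) h
      have hlast : ek (Fin.last n) = β (Fin.last n) := by
        show (if (k : ℕ) < ((Fin.last n : Fin (n + 1)) : ℕ) then β (Fin.last n) else 0)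
            = β (Fin.last n)
        rw [if_pos (by simpa using k.isLt)]
      show 0 < hk b / f₀ b
      rw [hhkb, hlast]
      exact div_pos (mul_pos (hβpos _) hpnb) (hf₀pos b ⟨hab.le, le_refl b⟩)
    have hIq : 0 ≤ ∫ y in a..b, q k y :=
      intervalIntegral.integral_nonneg hab.le (fun u hu => hqnn k u hu)
    have hIval : ∫ y in a..b, deriv tk y = c k * ∫ y in a..b, q k y := by
      rw [hderivtk, intervalIntegral.integral_const_mul]
    have hckpos : 0 < c k := by
      by_contra hle
      push_neg at hle
      have h1 : c k * ∫ y in a..b, q k y ≤ 0 := mul_nonpos_of_nonpos_of_nonneg hle hIq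
      rw [← hIval, hFTC, htka, sub_zero] at h1
      linarith
    exact ⟨c k, hckpos, fun x => hcollapse x⟩
  choose C hCpos hCeq using key
  set r : Fin (n + 1) → ℝ := fun j => γ j / β j with hr
  have hrβ : ∀ j, r j * β j = γ j := by
    intro j
    show γ j / β j * β j = γ j
    exact div_mul_cancel₀ (γ j) (hβpos j).ne'
  have hid : ∀ y, f₁ y = r 0 * f₀ y + ∑ k : Fin n, (r k.succ - r k.castSucc) *
      (∑ j : Fin (n + 1), (if (k : ℕ) < (j : ℕ) then β j else 0) * p j y) := by
    intro y
    have hswap : ∑ k : Fin n, (r k.succ - r k.castSucc) *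
        (∑ j : Fin (n + 1), (if (k : ℕ) < (j : ℕ) then β j else 0) * p j y)
        = ∑ j : Fin (n + 1), (∑ k : Fin n, (if (k : ℕ) < (j : ℕ) then r k.succ - r k.castSucc else 0))
            * (β j * p j y) := by
      simp_rw [Finset.mul_sum]
      rw [Finset.sum_comm]
      refine Finset.sum_congr rfl fun j _ => ?_
      rw [Finset.sum_mul]
      refine Finset.sum_congr rfl fun k _ => ?_
      by_cases h : (k : ℕ) < (j : ℕ)
      · simp only [if_pos h]
      · simp only [if_neg h]; ring
    rw [hγ y, hβ y, Finset.mul_sum, hswap]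
    simp_rw [RatioAux.telescope r]
    rw [← Finset.sum_add_distrib]
    refine Finset.sum_congr rfl fun j _ => ?_
    rw [← hrβ j]
    ring
  -- pointwise derivative identity on O
  have hderivO : ∀ x ∈ O, deriv (fun y => f₁ y / f₀ y) x
      = ∑ k : Fin n, ((r k.succ - r k.castSucc) * C k) * q k x := by
    intro x hx
    have hEq : (fun y => f₁ y / f₀ y) =ᶠ[nhds x] fun y =>
        r 0 + ∑ k : Fin n, (r k.succ - r k.castSucc) *
          ((∑ j : Fin (n + 1), (if (k : ℕ) < (j : ℕ) then β j else 0) * p j y) / f₀ y) := by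
      filter_upwards [hO.mem_nhds hx] with y hy
      have hy' : f₀ y ≠ 0 := hy
      rw [hid y, add_div, Finset.sum_div, mul_div_cancel_right₀ _ hy']
      exact congrArg _ (Finset.sum_congr rfl fun k _ => mul_div_assoc _ _ _)
    rw [hEq.deriv_eq]
    have hD : ∀ k : Fin n, HasDerivAt
        (fun y => (∑ j : Fin (n + 1), (if (k : ℕ) < (j : ℕ) then β j else 0) * p j y) / f₀ y)
        (C k * q k x) x := by
      intro k
      have hd := (hdivDiff _ (heU (fun j => if (k : ℕ) < (j : ℕ) then β j else 0)) x hx).hasDerivAt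
      rwa [hCeq k x] at hd
    have hDall : HasDerivAt (fun y =>
        r 0 + ∑ k : Fin n, (r k.succ - r k.castSucc) *
          ((∑ j : Fin (n + 1), (if (k : ℕ) < (j : ℕ) then β j else 0) * p j y) / f₀ y))
        (∑ k : Fin n, (r k.succ - r k.castSucc) * (C k * q k x)) x := by
      refine HasDerivAt.const_add _ ?_
      exact HasDerivAt.fun_sum fun k _ => (hD k).const_mul _
    rw [hDall.deriv]
    exact Finset.sum_congr rfl fun k _ => by ring
  -- identify w with the telescoped coefficients
  have hwEq : ∀ k : Fin n, w k = (r k.succ - r k.castSucc) * C k := by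
    set d : Fin n → ℝ := fun k => w k - (r k.succ - r k.castSucc) * C k with hd
    have hdz : ∀ x ∈ O, (∑ m₀, d m₀ * q m₀ x) = 0 := by
      intro x hx
      have : ∑ m₀, d m₀ * q m₀ x
          = (∑ m₀, w m₀ * q m₀ x) - ∑ m₀ : Fin n, ((r m₀.succ - r m₀.castSucc) * C m₀) * q m₀ x := by
        rw [← Finset.sum_sub_distrib]
        exact Finset.sum_congr rfl fun m₀ _ => by rw [hd]; ring
      rw [this, ← hw x, ← hderivO x hx, sub_self]
    have hvanish : ∀ j : ℕ, j < n → ∑ m₀ : Fin n, d m₀ * iteratedDeriv j (q m₀) a = 0 := by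
      intro j hj
      rw [← hS d j (by omega) a haO]
      have hEq0 : (fun y => ∑ m₀, d m₀ * q m₀ y) =ᶠ[nhds a] fun _ => (0 : ℝ) := by
        filter_upwards [hO.mem_nhds haO] with y hy
        exact hdz y hy
      rw [hEq0.iteratedDeriv_eq j, RatioAux.iteratedDeriv_fun_zero]
    have hall := RatioAux.elim_tri (fun m₀ : Fin n => (m₀ : ℕ)) (fun _ _ h => Fin.ext h) (fun j m₀ => iteratedDeriv j (q m₀) a) d
      (fun j m₀ hj => (hqz m₀).1 j hj) (fun m₀ => (hqz m₀).2.1) hvanish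
    intro k
    have hk0 := hall k k.isLt
    rw [hd] at hk0
    exact sub_eq_zero.mp hk0
  -- conclusion
  rw [Fin.monotone_iff_le_succ]
  constructor
  · intro hm k
    rw [hwEq k]
    exact mul_nonneg (sub_nonneg.mpr (hm k)) (hCpos k).le
  · intro hw' k
    have h1 := hw' k
    rw [hwEq k] at h1
    have h2 := (mul_nonneg_iff_of_pos_right (hCpos k)).mp h1
    exact sub_nonneg.mp h2
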